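/- For natural numbers d, n, ℓ with 1 ≤ d ≤ n ≤ ℓ and ℓ > 10n²/d, there exists a family 𝔉 of subsets of the ground set {1, …, ℓ} such that: every S ∈ 𝔉 has cardinality exactly n; for all distinct S, T ∈ 𝔉 one has |S ∩ T| ≤ d; and the cardinality of 𝔉 is at least 2^{d/10} (i.e., (|𝔉| : ℝ) ≥ 2^{(d:ℝ)/10}). -/

import Mathlib

set_option maxHeartbeats 1000000

open Finset

namespace NWaux


/-- number of coordinates where two words agree -/
def agree {n q : ℕ} (u v : Fin n → Fin q) : ℕ :=
  (Finset.univ.filter fun i => u i = v i).card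

lemma agree_comm {n q : ℕ} (u v : Fin n → Fin q) : agree u v = agree v u := by
  unfold agree
  congr 1
  ext i
  simp [eq_comm]

lemma ball_bound (n q d : ℕ) (u : Fin n → Fin q) :
    (Finset.univ.filter fun w : Fin n → Fin q => d + 1 ≤ agree w u).card
      ≤ n.choose (d+1) * q ^ (n - (d+1)) := by
  classical
  have hsub : (Finset.univ.filter fun w : Fin n → Fin q => d + 1 ≤ agree w u)
      ⊆ (Finset.univ.powersetCard (d+1)).biUnion
        (fun T => Fintype.piFinset fun i =>
          if i ∈ T then ({u i} : Finset (Fin q)) else Finset.univ) := by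
    intro w hw
    rw [mem_filter, agree] at hw
    obtain ⟨T, hT1, hT2⟩ := Finset.exists_subset_card_eq hw.2
    refine mem_biUnion.2 ⟨T, ?_, ?_⟩
    · exact Finset.mem_powersetCard.2 ⟨Finset.subset_univ _, hT2⟩
    · refine Fintype.mem_piFinset.2 fun i => ?_
      by_cases hi : i ∈ T
      · simp only [hi, if_true, Finset.mem_singleton]
        exact (Finset.mem_filter.1 (hT1 hi)).2
      · simp [hi]
  refine (Finset.card_le_card hsub).trans ?_
  refine (Finset.card_biUnion_le).trans ?_
  have hcard : ∀ T ∈ Finset.univ.powersetCard (d+1),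
      (Fintype.piFinset fun i =>
        if i ∈ T then ({u i} : Finset (Fin q)) else Finset.univ).card
      = q ^ (n - (d+1)) := by
    intro T hT
    obtain ⟨-, hTc⟩ := Finset.mem_powersetCard.1 hT
    rw [Fintype.card_piFinset]
    rw [← Finset.prod_mul_prod_compl T]
    have h1 : ∀ i ∈ T, (if i ∈ T then ({u i} : Finset (Fin q)) else Finset.univ).card = 1 := by
      intro i hi; simp [hi]
    have h2 : ∀ i ∈ Tᶜ, (if i ∈ T then ({u i} : Finset (Fin q)) else Finset.univ).card = q := by
      intro i hi
      simp only [Finset.mem_compl] at hi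
      simp [hi]
    rw [Finset.prod_congr rfl h1, Finset.prod_congr rfl h2]
    simp [Finset.card_compl, hTc]
  calc ∑ T ∈ Finset.univ.powersetCard (d+1),
        (Fintype.piFinset fun i =>
          if i ∈ T then ({u i} : Finset (Fin q)) else Finset.univ).card
      = ∑ T ∈ Finset.univ.powersetCard (d+1), q ^ (n - (d+1)) :=
        Finset.sum_congr rfl hcard
    _ = (Finset.univ.powersetCard (d+1)).card * q ^ (n - (d+1)) := by
        rw [Finset.sum_const, smul_eq_mul]
    _ = n.choose (d+1) * q ^ (n - (d+1)) := by
        rw [Finset.card_powersetCard, Finset.card_univ, Fintype.card_fin]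
    _ ≤ n.choose (d+1) * q ^ (n - (d+1)) := le_rfl

lemma greedy (n q d : ℕ) (M : ℕ)
    (hM : M * (1 + n.choose (d+1) * q ^ (n - (d+1))) ≤ q ^ n) :
    ∃ W : Finset (Fin n → Fin q), W.card = M ∧
      ∀ u ∈ W, ∀ v ∈ W, u ≠ v → agree u v ≤ d := by
  classical
  induction M with
  | zero => exact ⟨∅, by simp⟩
  | succ m ih =>
    obtain ⟨W, hWcard, hWpair⟩ :=
      ih (le_trans (Nat.mul_le_mul_right _ (Nat.le_succ m)) hM)
    set Bad : Finset (Fin n → Fin q) :=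
      W ∪ W.biUnion (fun u => Finset.univ.filter fun w => d + 1 ≤ agree w u) with hBad
    have hbadcard : Bad.card < q ^ n := by
      have h1 : Bad.card ≤ m + m * (n.choose (d+1) * q ^ (n - (d+1))) := by
        refine (Finset.card_union_le _ _).trans ?_
        refine Nat.add_le_add (le_of_eq hWcard) ?_
        refine (Finset.card_biUnion_le).trans ?_
        calc ∑ u ∈ W, (Finset.univ.filter fun w => d + 1 ≤ agree w u).card
            ≤ ∑ u ∈ W, n.choose (d+1) * q ^ (n - (d+1)) :=
              Finset.sum_le_sum fun u _ => ball_bound n q d u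
          _ = m * (n.choose (d+1) * q ^ (n - (d+1))) := by
              rw [Finset.sum_const, smul_eq_mul, hWcard]
      have h2 : m + m * (n.choose (d+1) * q ^ (n - (d+1)))
          < (m + 1) * (1 + n.choose (d+1) * q ^ (n - (d+1))) := by
        nlinarith [Nat.zero_le (n.choose (d+1) * q ^ (n - (d+1)))]
      exact lt_of_le_of_lt h1 (lt_of_lt_of_le h2 hM)
    have hex : ∃ w : Fin n → Fin q, w ∉ Bad := by
      by_contra hc
      push_neg at hc
      have : (Finset.univ : Finset (Fin n → Fin q)) ⊆ Bad := fun w _ => hc w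
      have := Finset.card_le_card this
      rw [Finset.card_univ, Fintype.card_fun, Fintype.card_fin, Fintype.card_fin] at this
      omega
    obtain ⟨w, hw⟩ := hex
    have hwW : w ∉ W := fun h => hw (Finset.mem_union_left _ h)
    have hwball : ∀ u ∈ W, agree w u ≤ d := by
      intro u hu
      by_contra hcon
      push_neg at hcon
      exact hw (Finset.mem_union_right _ (Finset.mem_biUnion.2
        ⟨u, hu, Finset.mem_filter.2 ⟨Finset.mem_univ _, hcon⟩⟩))
    refine ⟨insert w W, ?_, ?_⟩
    · rw [Finset.card_insert_of_notMem hwW, hWcard]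
    · intro u hu v hv huv
      rcases Finset.mem_insert.1 hu with hu' | hu' <;>
        rcases Finset.mem_insert.1 hv with hv' | hv'
      · exact absurd (hu'.trans hv'.symm) huv
      · subst hu'; exact hwball v hv'
      · subst hv'; rw [agree_comm]; exact hwball u hu'
      · exact hWpair u hu' v hv' huv



lemma exp_43_lt : Real.exp (4/3) < 4 := by
  have h3 : (0:ℝ) ≤ 4 := by norm_num
  refine lt_of_pow_lt_pow_left₀ 3 h3 ?_
  have : Real.exp (4/3) ^ 3 = Real.exp 4 := by
    rw [← Real.exp_nat_mul]
    norm_num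
  rw [this]
  have h4 : Real.exp 4 = Real.exp 1 ^ 4 := by
    rw [← Real.exp_nat_mul]
    norm_num
  rw [h4]
  have h := Real.exp_one_lt_d9
  have hp := (Real.exp_pos 1).le
  have h2 : Real.exp 1 ^ 4 < 2.7182818286 ^ 4 := by
    exact pow_lt_pow_left₀ h hp (by norm_num)
  have h5 : (2.7182818286:ℝ) ^ 4 < 4 ^ 3 := by norm_num
  linarith

lemma pow_lemma (d : ℕ) (hd : 1 ≤ d) :
    ((d : ℝ) + 1) ^ (d + 1) ≤ 4 * (d : ℝ) ^ (d + 1) := by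
  rcases le_or_gt d 3 with h3 | h3
  · interval_cases d <;> norm_num
  · -- d ≥ 4
    have hd0 : (0:ℝ) < d := by positivity
    have key : (1 + 1/(d:ℝ)) ^ (d + 1) ≤ 4 := by
      have h1 : (1 + 1/(d:ℝ)) ≤ Real.exp (1/d) := by
        have := Real.add_one_le_exp (1/(d:ℝ))
        linarith
      have h2 : (1 + 1/(d:ℝ)) ^ (d+1) ≤ Real.exp (1/d) ^ (d+1) := by
        refine pow_le_pow_left₀ ?_ h1 _
        positivity
      have h3' : Real.exp (1/(d:ℝ)) ^ (d+1) = Real.exp ((d+1)/d) := by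
        rw [← Real.exp_nat_mul]
        congr 1
        push_cast
        field_simp
      have h4 : ((d:ℝ)+1)/d ≤ 4/3 := by
        rw [div_le_div_iff₀ hd0 (by norm_num)]
        have : (4:ℝ) ≤ d := by exact_mod_cast h3
        linarith
      calc (1 + 1/(d:ℝ)) ^ (d+1) ≤ Real.exp ((d+1)/d) := by rw [← h3']; exact h2
        _ ≤ Real.exp (4/3) := Real.exp_le_exp.2 h4
        _ ≤ 4 := exp_43_lt.le
    have expand : ((d:ℝ) + 1) ^ (d+1) = (d:ℝ)^(d+1) * (1 + 1/d) ^ (d+1) := by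
      rw [← mul_pow]
      congr 1
      field_simp
    rw [expand]
    nlinarith [pow_nonneg (le_of_lt hd0) (d+1), key, pow_pos hd0 (d+1)]

lemma fact_bound (d : ℕ) (hd : 1 ≤ d) :
    4 * 2^d * (d:ℝ)^(d+1) ≤ 9^(d+1) * (Nat.factorial (d+1)) := by
  induction d with
  | zero => omega
  | succ m ih =>
    rcases Nat.eq_or_lt_of_le hd with h1 | h1
    · -- m + 1 = 1
      have : m = 0 := by omega
      subst this
      norm_num [Nat.factorial]
    · have hm : 1 ≤ m := by omega
      have ihm := ih hm
      have hpl := pow_lemma m hm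
      have hfact : (Nat.factorial (m+2) : ℝ) = (m+2) * Nat.factorial (m+1) := by
        rw [Nat.factorial_succ]; push_cast; ring
      have hm0 : (0:ℝ) ≤ m := by positivity
      have hcast : ((m+1 : ℕ) : ℝ) = (m:ℝ) + 1 := by push_cast; ring
      rw [show m + 1 + 1 = m + 2 from rfl, hcast]
      calc 4 * 2^(m+1) * ((m:ℝ)+1)^(m+2)
          = 2 * ((m:ℝ)+1) * (4 * 2^m * ((m:ℝ)+1)^(m+1)) := by
            push_cast; ring
        _ ≤ 2 * ((m:ℝ)+1) * (4 * 2^m * (4 * (m:ℝ)^(m+1))) := by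
            have h2 : (0:ℝ) ≤ 2 * ((m:ℝ)+1) * (4 * 2^m) := by positivity
            nlinarith [hpl, h2]
        _ = 8 * ((m:ℝ)+1) * (4 * 2^m * (m:ℝ)^(m+1)) := by ring
        _ ≤ 8 * ((m:ℝ)+1) * (9^(m+1) * (Nat.factorial (m+1))) := by
            have h2 : (0:ℝ) ≤ 8 * ((m:ℝ)+1) := by positivity
            nlinarith [ihm, h2]
        _ ≤ 9 * ((m:ℝ)+2) * (9^(m+1) * (Nat.factorial (m+1))) := by
            have h2 : (0:ℝ) ≤ 9^(m+1) * ((Nat.factorial (m+1)):ℝ) := by positivity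
            nlinarith [h2]
        _ = 9^(m+2) * ((Nat.factorial (m+2)):ℝ) := by
            rw [hfact]; ring
      -- note goal uses m+1: exponents (m+1)+1 = m+2; cast (↑(m+1)) = ↑m + 1
      
lemma decode {q a b r s : ℕ} (hr : r < q) (hs : s < q)
    (h : a * q + r = b * q + s) : a = b ∧ r = s := by
  have hq : 0 < q := by omega
  have h1 : (r + a * q) % q = (s + b * q) % q := by
    congr 1; omega
  rw [Nat.add_mul_mod_self_right, Nat.add_mul_mod_self_right,
    Nat.mod_eq_of_lt hr, Nat.mod_eq_of_lt hs] at h1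
  constructor
  · have : a * q = b * q := by omega
    exact Nat.eq_of_mul_eq_mul_right hq this
  · exact h1

end NWaux

/-- **Nisan–Wigderson design.** For `1 ≤ d ≤ n ≤ ℓ` with `ℓ > 10n²/d` there is a
family of `n`-element subsets of `{1,…,ℓ}`, pairwise intersecting in at most `d`
elements, of cardinality at least `2^(d/10)`. -/
theorem nisan_wigderson_design
    (d n ℓ : ℕ) (hd : 1 ≤ d) (hdn : d ≤ n) (hnl : n ≤ ℓ)
    (hl : (10 * (n : ℝ) ^ 2) / (d : ℝ) < (ℓ : ℝ)) :
    ∃ 𝔉 : Finset (Finset (Fin ℓ)),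
      (∀ S ∈ 𝔉, S.card = n) ∧
      (∀ S ∈ 𝔉, ∀ T ∈ 𝔉, S ≠ T → (S ∩ T).card ≤ d) ∧
      (2 : ℝ) ^ ((d : ℝ) / 10) ≤ (𝔉.card : ℝ) := by
  classical
  have hn : 1 ≤ n := hd.trans hdn
  have hd0 : (0:ℝ) < d := by exact_mod_cast hd
  have hn0 : (0:ℝ) < n := by exact_mod_cast hn
  set q := ℓ / n with hqdef
  -- ℓ > 10 n
  have hl10 : 10 * n < ℓ := by
    have h1 : (10:ℝ) * n ≤ 10 * (n:ℝ)^2 / d := by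
      rw [le_div_iff₀ hd0]
      have hdn' : (d:ℝ) ≤ n := by exact_mod_cast hdn
      nlinarith
    have h2 : (10:ℝ) * n < ℓ := lt_of_le_of_lt h1 hl
    exact_mod_cast h2
  have hq10 : 10 ≤ q := (Nat.le_div_iff_mul_le (by omega)).2 (by omega)
  have hq0 : 0 < q := by omega
  have hnq : n * q ≤ ℓ := by
    rw [hqdef, mul_comm]
    exact Nat.div_mul_le_self ℓ n
  have hlq : ℓ < n * (q + 1) := by
    have h1 : n * q + ℓ % n = ℓ := Nat.div_add_mod ℓ n
    have h2 : ℓ % n < n := Nat.mod_lt ℓ (by omega)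
    rw [Nat.mul_succ]
    omega
  -- real bound q * d ≥ 9 n
  have hqd : (9:ℝ) * n ≤ q * d := by
    have h1 : 10 * (n:ℝ)^2 < ℓ * d := by
      rw [div_lt_iff₀ hd0] at hl
      linarith
    have h2 : (ℓ:ℝ) < n * (q+1) := by exact_mod_cast hlq
    have hdn' : (d:ℝ) ≤ n := by exact_mod_cast hdn
    have h3 : (ℓ:ℝ) * d < n * (q+1) * d := by
      apply mul_lt_mul_of_pos_right h2 hd0
    nlinarith
  set M := ⌈(2:ℝ) ^ ((d:ℝ)/10)⌉₊ with hMdef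
  have hx1 : (1:ℝ) ≤ (2:ℝ) ^ ((d:ℝ)/10) := by
    have h := Real.rpow_le_rpow_of_exponent_le (one_le_two) (show (0:ℝ) ≤ (d:ℝ)/10 by positivity)
    simpa using h
  have hM1 : (2:ℝ) ^ ((d:ℝ)/10) ≤ M := Nat.le_ceil _
  have hM2 : (M:ℝ) ≤ 2 * (2:ℝ) ^ ((d:ℝ)/10) := by
    have h := Nat.ceil_lt_add_one (le_trans zero_le_one hx1)
    have : (M:ℝ) < (2:ℝ) ^ ((d:ℝ)/10) + 1 := h
    linarith
  have hrpow : (2:ℝ) ^ ((d:ℝ)/10) ≤ (2:ℝ) ^ (d:ℕ) := by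
    have h := Real.rpow_le_rpow_of_exponent_le one_le_two
      (show (d:ℝ)/10 ≤ (d:ℝ) by linarith [hd0])
    rwa [Real.rpow_natCast] at h
  -- key counting inequality
  have hkey : M * (1 + n.choose (d+1) * q ^ (n - (d+1))) ≤ q ^ n := by
    rcases eq_or_lt_of_le hdn with hdn' | hdn'
    · -- d = n
      rw [Nat.choose_eq_zero_of_lt (by omega : n < d + 1)]
      simp only [Nat.zero_mul, Nat.mul_one, Nat.add_zero]
      rw [← Nat.cast_le (α := ℝ)]
      push_cast
      calc (M:ℝ) ≤ 2 * (2:ℝ) ^ ((d:ℝ)/10) := hM2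
        _ ≤ 2 * (2:ℝ)^(d:ℕ) := by linarith [hrpow]
        _ ≤ (10:ℝ)^(d:ℕ) := by
            have h5 : (2:ℝ) ≤ 5 ^ d := by
              calc (2:ℝ) ≤ 5^1 := by norm_num
                _ ≤ 5^d := pow_le_pow_right₀ (by norm_num) hd
            calc 2 * (2:ℝ)^d ≤ (5:ℝ)^d * 2^d := by nlinarith [pow_pos (show (0:ℝ)<2 by norm_num) d]
              _ = 10^d := by rw [← mul_pow]; norm_num
        _ ≤ (q:ℝ)^(n:ℕ) := by
            have h10q : (10:ℝ) ≤ q := by exact_mod_cast hq10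
            have := pow_le_pow_left₀ (by norm_num : (0:ℝ) ≤ 10) h10q n
            refine le_trans ?_ this
            exact pow_le_pow_right₀ (by norm_num) (by omega)
    · -- d < n
      have hC1 : 1 ≤ n.choose (d+1) := Nat.choose_pos (by omega)
      have hq1 : 1 ≤ q ^ (n - (d+1)) := Nat.one_le_pow _ _ hq0
      have h2 : 2 * M * n.choose (d+1) ≤ q ^ (d+1) := by
        rw [← Nat.cast_le (α := ℝ)]
        push_cast
        have hdp : (0:ℝ) < (d:ℝ)^(d+1) := pow_pos hd0 _
        rw [← mul_le_mul_iff_of_pos_right hdp]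
        have c1 : 2 * (M:ℝ) * n.choose (d+1) * (d:ℝ)^(d+1)
            ≤ 4 * 2^d * (d:ℝ)^(d+1) * n.choose (d+1) := by
          have hc0 : (0:ℝ) ≤ n.choose (d+1) := by positivity
          have hm : 2*(M:ℝ) ≤ 4 * 2^d := by
            calc 2*(M:ℝ) ≤ 2*(2 * (2:ℝ)^((d:ℝ)/10)) := by linarith
              _ ≤ 4 * 2^d := by linarith [hrpow]
          have := mul_le_mul_of_nonneg_right hm
            (show (0:ℝ) ≤ (n.choose (d+1) : ℝ) * (d:ℝ)^(d+1) by positivity)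
          nlinarith [this]
        have c2 : 4 * 2^d * (d:ℝ)^(d+1) * n.choose (d+1)
            ≤ 9^(d+1) * (Nat.factorial (d+1)) * n.choose (d+1) := by
          have hc0 : (0:ℝ) ≤ n.choose (d+1) := by positivity
          have := mul_le_mul_of_nonneg_right (NWaux.fact_bound d hd) hc0
          nlinarith [this]
        have c3 : (9:ℝ)^(d+1) * (Nat.factorial (d+1)) * n.choose (d+1)
            ≤ (9:ℝ)^(d+1) * (n:ℝ)^(d+1) := by
          have hdesc : ((d+1).factorial * n.choose (d+1) : ℝ) ≤ (n:ℝ)^(d+1) := by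
            have := Nat.descFactorial_le_pow n (d+1)
            rw [Nat.descFactorial_eq_factorial_mul_choose] at this
            exact_mod_cast this
          have h9 : (0:ℝ) ≤ (9:ℝ)^(d+1) := by positivity
          calc (9:ℝ)^(d+1) * (Nat.factorial (d+1)) * n.choose (d+1)
              = (9:ℝ)^(d+1) * ((Nat.factorial (d+1)) * n.choose (d+1)) := by ring
            _ ≤ (9:ℝ)^(d+1) * (n:ℝ)^(d+1) := by
                refine mul_le_mul_of_nonneg_left ?_ h9
                exact_mod_cast hdesc
        have c4 : (9:ℝ)^(d+1) * (n:ℝ)^(d+1) ≤ (q:ℝ)^(d+1) * (d:ℝ)^(d+1) := by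
          rw [← mul_pow, ← mul_pow]
          refine pow_le_pow_left₀ (by positivity) ?_ _
          linarith [hqd]
        linarith
      calc M * (1 + n.choose (d+1) * q ^ (n - (d+1)))
          ≤ M * (2 * (n.choose (d+1) * q ^ (n - (d+1)))) := by
            have : 1 ≤ n.choose (d+1) * q ^ (n - (d+1)) := Nat.one_le_iff_ne_zero.2 (by positivity)
            exact Nat.mul_le_mul_left _ (by omega)
        _ = (2 * M * n.choose (d+1)) * q ^ (n - (d+1)) := by ring
        _ ≤ q ^ (d+1) * q ^ (n - (d+1)) := Nat.mul_le_mul_right _ h2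
        _ = q ^ n := by rw [← pow_add]; congr 1; omega
  -- obtain the code
  obtain ⟨W, hWcard, hWpair⟩ := NWaux.greedy n q d M hkey
  -- embedding into Fin ℓ
  have hemb : ∀ (i : Fin n) (x : Fin q), i.val * q + x.val < ℓ := by
    intro i x
    have h1 : i.val * q + x.val < (i.val + 1) * q := by
      have := x.isLt
      nlinarith
    have h2 : (i.val + 1) * q ≤ n * q := Nat.mul_le_mul_right q i.isLt
    omega
  set emb : (Fin n → Fin q) → Fin n → Fin ℓ :=
    fun w i => ⟨i.val * q + (w i).val, hemb i (w i)⟩ with hembdef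
  set Sset : (Fin n → Fin q) → Finset (Fin ℓ) :=
    fun w => Finset.image (emb w) Finset.univ with hSdef
  have hdec : ∀ (w w' : Fin n → Fin q) (i j : Fin n),
      emb w i = emb w' j → i = j ∧ w i = w' j := by
    intro w w' i j h
    have h' : i.val * q + (w i).val = j.val * q + (w' j).val := by
      have := congrArg Fin.val h
      simpa [hembdef] using this
    obtain ⟨h1, h2⟩ := NWaux.decode (w i).isLt (w' j).isLt h'
    exact ⟨Fin.ext h1, Fin.ext h2⟩
  have hScard : ∀ w, (Sset w).card = n := by
    intro w
    rw [hSdef]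
    rw [Finset.card_image_of_injective _ (fun i j h => (hdec w w i j h).1)]
    simp
  have hSinter : ∀ u v : Fin n → Fin q, (Sset u ∩ Sset v).card ≤ NWaux.agree u v := by
    intro u v
    have hsub : Sset u ∩ Sset v ⊆
        Finset.image (emb u) (Finset.univ.filter fun i => u i = v i) := by
      intro x hx
      obtain ⟨hx1, hx2⟩ := Finset.mem_inter.1 hx
      obtain ⟨i, -, hi⟩ := Finset.mem_image.1 hx1
      obtain ⟨j, -, hj⟩ := Finset.mem_image.1 hx2
      obtain ⟨hij, huv⟩ := hdec u v i j (hi.trans hj.symm)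
      subst hij
      exact Finset.mem_image.2 ⟨i, Finset.mem_filter.2 ⟨Finset.mem_univ _, huv⟩, hi⟩
    calc (Sset u ∩ Sset v).card
        ≤ (Finset.image (emb u) (Finset.univ.filter fun i => u i = v i)).card :=
          Finset.card_le_card hsub
      _ ≤ (Finset.univ.filter fun i => u i = v i).card := Finset.card_image_le
      _ = NWaux.agree u v := rfl
  have hSinj : Function.Injective Sset := by
    intro u v h
    funext i
    have hmem : emb u i ∈ Sset v := by
      rw [← h, hSdef]
      exact Finset.mem_image.2 ⟨i, Finset.mem_univ _, rfl⟩
    obtain ⟨j, -, hj⟩ := Finset.mem_image.1 hmem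
    obtain ⟨hij, huv⟩ := hdec v u j i hj
    subst hij
    exact huv.symm
  refine ⟨W.image Sset, ?_, ?_, ?_⟩
  · intro S hS
    obtain ⟨w, -, rfl⟩ := Finset.mem_image.1 hS
    exact hScard w
  · intro S hS T hT hST
    obtain ⟨u, hu, rfl⟩ := Finset.mem_image.1 hS
    obtain ⟨v, hv, rfl⟩ := Finset.mem_image.1 hT
    have huv : u ≠ v := fun h => hST (by rw [h])
    exact le_trans (hSinter u v) (hWpair u hu v hv huv)
  · rw [Finset.card_image_of_injective _ hSinj, hWcard]
    exact hM1
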